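/- Bounded unwinding of until and release on finite teams of ultimately periodic traces: let T = {u₁v₁^ω, …, u_nv_n^ω} be a finite team of ultimately periodic traces (u_j finite traces, v_j nonempty finite traces), let s = max_j |u_j| and p = lcm{|v_j| : 1 ≤ j ≤ n}. Then for all LTL formulae ψ, φ: (i) T ⊨ ψUφ iff there exists k ≤ s+p with T[k,∞) ⊨ φ and T[k',∞) ⊨ ψ for all k' < k; and (ii) T ⊨ ψRφ iff for all k ≤ s+p, T[k,∞) ⊨ φ or there exists k' < k with T[k',∞) ⊨ ψ. -/

import Mathlib

namespace TeamLTL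

/-- A trace over a set `AP` of atomic propositions: an infinite sequence of letters,
each letter being a set of atomic propositions. -/
abbrev Trace (AP : Type) : Type := ℕ → Set AP

/-- The suffix `t[i,∞)` of a trace. -/
def Trace.shift {AP : Type} (t : Trace AP) (i : ℕ) : Trace AP := fun n => t (n + i)

/-- The suffix team `T[i,∞) = { t[i,∞) | t ∈ T }`. -/
def teamShift {AP : Type} (T : Set (Trace AP)) (i : ℕ) : Set (Trace AP) :=
  (fun t => Trace.shift t i) '' T

/-- LTL formulae in negation normal form. -/
inductive LTL (AP : Type) : Type
  | atom : AP → LTL AP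
  | natom : AP → LTL AP
  | conj : LTL AP → LTL AP → LTL AP
  | disj : LTL AP → LTL AP → LTL AP
  | next : LTL AP → LTL AP
  | untl : LTL AP → LTL AP → LTL AP
  | rels : LTL AP → LTL AP → LTL AP

/-- Team semantics for LTL: `TeamSat T φ` means `T ⊨ φ`. -/
def TeamSat {AP : Type} : Set (Trace AP) → LTL AP → Prop
  | T, .atom p => ∀ t ∈ T, p ∈ t 0
  | T, .natom p => ∀ t ∈ T, p ∉ t 0
  | T, .conj φ ψ => TeamSat T φ ∧ TeamSat T ψ
  | T, .disj φ ψ => ∃ T₁ T₂ : Set (Trace AP), T₁ ∪ T₂ = T ∧ TeamSat T₁ φ ∧ TeamSat T₂ ψ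
  | T, .next φ => TeamSat (teamShift T 1) φ
  | T, .untl φ ψ => ∃ k : ℕ, TeamSat (teamShift T k) ψ ∧ ∀ k' < k, TeamSat (teamShift T k') φ
  | T, .rels φ ψ => ∀ k : ℕ, TeamSat (teamShift T k) ψ ∨ ∃ k' < k, TeamSat (teamShift T k') φ

/-- Classical semantics for LTL on a single trace: `Sat t φ` means `t ⊨ φ`. -/
def Sat {AP : Type} : Trace AP → LTL AP → Prop
  | t, .atom p => p ∈ t 0
  | t, .natom p => p ∉ t 0
  | t, .conj φ ψ => Sat t φ ∧ Sat t ψ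
  | t, .disj φ ψ => Sat t φ ∨ Sat t ψ
  | t, .next φ => Sat (Trace.shift t 1) φ
  | t, .untl φ ψ => ∃ k : ℕ, Sat (Trace.shift t k) ψ ∧ ∀ k' < k, Sat (Trace.shift t k') φ
  | t, .rels φ ψ => ∀ k : ℕ, Sat (Trace.shift t k) ψ ∨ ∃ k' < k, Sat (Trace.shift t k') φ

/-- The eventually operator `F φ := (p ∨ ¬p) U φ`. -/
def eventually {AP : Type} (p : AP) (φ : LTL AP) : LTL AP :=
  .untl (.disj (.atom p) (.natom p)) φ

/-- The ultimately periodic trace `u v^ω` determined by a finite trace `u`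
and a nonempty finite trace `v`. -/
def upTrace (u v : List (Set ℕ)) (hv : v ≠ []) : Trace ℕ := fun n =>
  if h : n < u.length then u.get ⟨n, h⟩
  else v.get ⟨(n - u.length) % v.length, Nat.mod_lt _ (List.length_pos_iff.mpr hv)⟩

/-- The finite team `{u₁v₁^ω, …, u_nv_n^ω}` of ultimately periodic traces. -/
def upTeam (n : ℕ) (u v : Fin n → List (Set ℕ)) (hv : ∀ j, v j ≠ []) :
    Set (Trace ℕ) :=
  Set.range fun j => upTrace (u j) (v j) (hv j)

lemma upTrace_shift_eq (u v : List (Set ℕ)) (hv : v ≠ []) (s m p : ℕ)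
    (hs : u.length ≤ s) (hp : v.length ∣ p) :
    Trace.shift (upTrace u v hv) (s + m) = Trace.shift (upTrace u v hv) (s + m % p) := by
  funext i
  simp only [Trace.shift, upTrace]
  rw [dif_neg (by omega), dif_neg (by omega)]
  have h1 : i + (s + m) - u.length = (i + s - u.length) + m := by omega
  have h2 : i + (s + m % p) - u.length = (i + s - u.length) + m % p := by omega
  have hidx : (i + (s + m) - u.length) % v.length
      = (i + (s + m % p) - u.length) % v.length := by
    rw [h1, h2, Nat.add_mod, Nat.add_mod (i + s - u.length), Nat.mod_mod_of_dvd m hp]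
  simp only [hidx]

lemma teamShift_periodic (n : ℕ) (u v : Fin n → List (Set ℕ)) (hv : ∀ j, v j ≠ [])
    (m : ℕ) :
    teamShift (upTeam n u v hv) ((Finset.univ.sup fun j => (u j).length) + m) =
    teamShift (upTeam n u v hv) ((Finset.univ.sup fun j => (u j).length) +
      m % (Finset.univ.lcm fun j => (v j).length)) := by
  unfold teamShift upTeam
  rw [← Set.range_comp, ← Set.range_comp]
  have : ((fun t => Trace.shift t ((Finset.univ.sup fun j => (u j).length) + m)) ∘
      fun j => upTrace (u j) (v j) (hv j)) =
      ((fun t => Trace.shift t ((Finset.univ.sup fun j => (u j).length) +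
        m % (Finset.univ.lcm fun j => (v j).length))) ∘
      fun j => upTrace (u j) (v j) (hv j)) := by
    funext j
    exact upTrace_shift_eq (u j) (v j) (hv j) _ m _
      (Finset.le_sup (f := fun j => (u j).length) (Finset.mem_univ j))
      (Finset.dvd_lcm (f := fun j => (v j).length) (Finset.mem_univ j))
  rw [this]

/-- Bounded unwinding of until and release on finite teams of
ultimately periodic traces, with bound `s + p` where `s = max_j |u_j|` and
`p = lcm_j |v_j|`. -/
theorem bounded_unwinding (n : ℕ) (u v : Fin n → List (Set ℕ))
    (hv : ∀ j, v j ≠ []) (ψ φ : LTL ℕ) :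
    (TeamSat (upTeam n u v hv) (.untl ψ φ) ↔
      ∃ k ≤ (Finset.univ.sup fun j => (u j).length) +
              (Finset.univ.lcm fun j => (v j).length),
        TeamSat (teamShift (upTeam n u v hv) k) φ ∧
        ∀ k' < k, TeamSat (teamShift (upTeam n u v hv) k') ψ) ∧
    (TeamSat (upTeam n u v hv) (.rels ψ φ) ↔
      ∀ k ≤ (Finset.univ.sup fun j => (u j).length) +
              (Finset.univ.lcm fun j => (v j).length),
        TeamSat (teamShift (upTeam n u v hv) k) φ ∨
        ∃ k' < k, TeamSat (teamShift (upTeam n u v hv) k') ψ) := by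
  set T := upTeam n u v hv with hT
  set s := (Finset.univ.sup fun j => (u j).length) with hs
  set p := (Finset.univ.lcm fun j => (v j).length) with hp
  have hp0 : 0 < p := by
    apply Nat.pos_of_ne_zero
    rw [hp, Ne, Finset.lcm_eq_zero_iff]
    rintro ⟨j, -, hj⟩
    exact hv j (List.length_eq_zero_iff.mp hj)
  have key : ∀ k, s ≤ k → teamShift T k = teamShift T (s + (k - s) % p) := by
    intro k hk
    have := teamShift_periodic n u v hv (k - s)
    rwa [Nat.add_sub_cancel' hk] at this
  constructor
  · constructor
    · rintro ⟨k, hφ, hψ⟩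
      by_cases hk : k ≤ s + p
      · exact ⟨k, hk, hφ, hψ⟩
      · push_neg at hk
        have hlt : (k - s) % p < p := Nat.mod_lt _ hp0
        refine ⟨s + (k - s) % p, by omega, ?_, ?_⟩
        · rw [key k (by omega)] at hφ; exact hφ
        · intro k' hk'; exact hψ k' (by omega)
    · rintro ⟨k, -, hφ, hψ⟩; exact ⟨k, hφ, hψ⟩
  · constructor
    · intro h k _; exact h k
    · intro h k
      by_cases hk : k ≤ s + p
      · exact h k hk
      · push_neg at hk
        have hlt : (k - s) % p < p := Nat.mod_lt _ hp0
        rcases h (s + (k - s) % p) (by omega) with hφ | ⟨k', hk', hψ⟩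
        · left; rw [key k (by omega)]; exact hφ
        · right; exact ⟨k', by omega, hψ⟩

end TeamLTL
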